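/- Let q be a prime power, m ≥ 2, r > 1 a divisor of q-1, N = q^m - 1, and 1 ≤ ℓ ≤ m-1. The number of integers i with 1 ≤ i ≤ N-1, Hamming weight wt(i) ≤ ℓ (number of nonzero base-q digits), and i ≡ 1 (mod r), equals (1/r) Σ_{t=1}^{ℓ} binom(m, t) (q-1)^t. -/

import Mathlib

open Finset

private lemma pow_div_lt {q m i : ℕ} (hq2 : 2 ≤ q) (hi : i < q ^ (m + 1)) : i / q < q ^ m := by
  rw [Nat.div_lt_iff_lt_mul (by omega : 0 < q)]
  calc i < q ^ (m + 1) := hi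
    _ = q ^ m * q := by ring

private lemma mod_aux {q r : ℕ} (hq2 : 2 ≤ q) (hq1 : q % r = 1) :
    ∀ m i, i < q ^ m → i % r = (∑ j ∈ Finset.range m, i / q ^ j % q) % r := by
  have hr0 : 0 < r := by
    rcases Nat.eq_zero_or_pos r with h | h
    · simp [h] at hq1; omega
    · exact h
  have hr1 : 1 < r := hq1 ▸ Nat.mod_lt q hr0
  have hq1' : q ≡ 1 [MOD r] := by
    unfold Nat.ModEq; rw [hq1, Nat.mod_eq_of_lt hr1]
  intro m
  induction m with
  | zero =>
    intro i hi
    simp only [pow_zero, Nat.lt_one_iff] at hi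
    subst hi; simp
  | succ m ih =>
    intro i hi
    have IH : i / q ≡ (∑ j ∈ Finset.range m, i / q / q ^ j % q) [MOD r] :=
      ih (i / q) (pow_div_lt hq2 hi)
    rw [Finset.sum_range_succ']
    simp only [pow_succ', ← Nat.div_div_eq_div_mul, pow_zero, Nat.div_one]
    have key : i ≡ i % q + i / q [MOD r] := by
      calc i = q * (i / q) + i % q := (Nat.div_add_mod i q).symm
        _ ≡ 1 * (i / q) + i % q [MOD r] := Nat.ModEq.add_right _ (hq1'.mul_right _)
        _ = i % q + i / q := by ring
    have final := key.trans (Nat.ModEq.add_left _ IH)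
    rw [show (∑ j ∈ Finset.range m, i / q / q ^ j % q) + i % q
        = i % q + ∑ j ∈ Finset.range m, i / q / q ^ j % q by ring]
    exact final

open Finset

private lemma wt_aux {q : ℕ} (hq2 : 2 ≤ q) :
    ∀ m i, i < q ^ m →
      ((Nat.digits q i).filter (· ≠ 0)).length
        = ((Finset.range m).filter fun j => i / q ^ j % q ≠ 0).card := by
  intro m
  induction m with
  | zero =>
    intro i hi
    simp only [pow_zero, Nat.lt_one_iff] at hi
    subst hi; simp
  | succ m ih =>
    intro i hi
    rcases Nat.eq_zero_or_pos i with h0 | h0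
    · subst h0; simp
    · have hiq : i / q < q ^ m := by
        rw [Nat.div_lt_iff_lt_mul (by omega : 0 < q)]
        calc i < q ^ (m + 1) := hi
          _ = q ^ m * q := by ring
      have IH := ih (i / q) hiq
      rw [Nat.digits_def' hq2 h0]
      rw [Finset.card_filter, Finset.sum_range_succ']
      simp only [pow_succ', ← Nat.div_div_eq_div_mul, pow_zero, Nat.div_one]
      rw [← Finset.card_filter, ← IH, List.filter_cons]
      by_cases h : i % q ≠ 0 <;> simp [h]

private lemma rep_aux {q : ℕ} (hq2 : 2 ≤ q) :
    ∀ m, Nat.digits q (q ^ m - 1) = List.replicate m (q - 1) := by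
  intro m
  induction m with
  | zero => simp
  | succ m ih =>
    have hq0 : 0 < q := by omega
    have hpow : 1 ≤ q ^ m := Nat.one_le_pow _ _ hq0
    have h1 : q ^ (m + 1) - 1 = q * (q ^ m - 1) + (q - 1) := by
      have : q ^ (m + 1) = q * q ^ m := by ring
      rw [this]
      have : q * q ^ m ≥ q := Nat.le_mul_of_pos_right q hpow
      rw [Nat.mul_sub]
      omega
    have hpos : 0 < q ^ (m + 1) - 1 := by
      have : q ≤ q ^ (m + 1) := by
        calc q = q ^ 1 := (pow_one q).symm
          _ ≤ q ^ (m + 1) := Nat.pow_le_pow_right hq0 (by omega)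
      omega
    rw [Nat.digits_def' hq2 hpos, h1]
    have hmod : (q * (q ^ m - 1) + (q - 1)) % q = q - 1 := by
      rw [Nat.mul_add_mod, Nat.mod_eq_of_lt (by omega)]
    have hdiv : (q * (q ^ m - 1) + (q - 1)) / q = q ^ m - 1 := by
      rw [Nat.mul_add_div hq0, Nat.div_eq_of_lt (by omega)]
      omega
    rw [hmod, hdiv, ih, List.replicate_succ]

private def tau {q m : ℕ} (k : ℕ) (f : Fin m → Fin q) : Fin m → Fin q :=
  if h : (Finset.univ.filter fun j => (f j : ℕ) ≠ 0).Nonempty then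
    Function.update f ((Finset.univ.filter fun j => (f j : ℕ) ≠ 0).min' h)
      ⟨min (((f ((Finset.univ.filter fun j => (f j : ℕ) ≠ 0).min' h) : ℕ) - 1 + k) % (q - 1) + 1)
          (q - 1), by
        have hq : 0 < q := (f ((Finset.univ.filter fun j => (f j : ℕ) ≠ 0).min' h)).pos
        omega⟩
  else f


private lemma min'_pos {q m : ℕ} (f : Fin m → Fin q)
    (h : (Finset.univ.filter fun j => (f j : ℕ) ≠ 0).Nonempty) :
    1 ≤ (f ((Finset.univ.filter fun j => (f j : ℕ) ≠ 0).min' h) : ℕ) := by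
  have := (Finset.mem_filter.mp (Finset.min'_mem _ h)).2
  omega

private lemma tau_val {q m : ℕ} (hq2 : 2 ≤ q) (k : ℕ) (f : Fin m → Fin q)
    (h : (Finset.univ.filter fun j => (f j : ℕ) ≠ 0).Nonempty) (j : Fin m) :
    (tau k f j : ℕ) =
      if j = (Finset.univ.filter fun j => (f j : ℕ) ≠ 0).min' h then
        ((f ((Finset.univ.filter fun j => (f j : ℕ) ≠ 0).min' h) : ℕ) - 1 + k) % (q - 1) + 1
      else (f j : ℕ) := by
  set j0 := (Finset.univ.filter fun j => (f j : ℕ) ≠ 0).min' h with hj0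
  have hmin : min (((f j0 : ℕ) - 1 + k) % (q - 1) + 1) (q - 1)
      = ((f j0 : ℕ) - 1 + k) % (q - 1) + 1 := by
    have := Nat.mod_lt ((f j0 : ℕ) - 1 + k) (show 0 < q - 1 by omega)
    omega
  unfold tau
  rw [dif_pos h]
  by_cases hj : j = j0
  · subst hj
    rw [if_pos rfl, Function.update_self]
    exact hmin
  · rw [if_neg hj, Function.update_of_ne hj]

private lemma tau_ne {q m : ℕ} (hq2 : 2 ≤ q) (k : ℕ) (f : Fin m → Fin q) (j : Fin m) :
    (tau k f j : ℕ) ≠ 0 ↔ (f j : ℕ) ≠ 0 := by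
  by_cases h : (Finset.univ.filter fun j => (f j : ℕ) ≠ 0).Nonempty
  · have hv := tau_val hq2 k f h j
    by_cases hj : j = (Finset.univ.filter fun j => (f j : ℕ) ≠ 0).min' h
    · rw [if_pos hj] at hv
      have hjmem := Finset.min'_mem _ h
      rw [Finset.mem_filter] at hjmem
      have := hjmem.2
      rw [← hj] at this
      constructor <;> intro _
      · exact this
      · omega
    · rw [if_neg hj] at hv
      omega
  · unfold tau; rw [dif_neg h]

private lemma tau_supp {q m : ℕ} (hq2 : 2 ≤ q) (k : ℕ) (f : Fin m → Fin q) :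
    (Finset.univ.filter fun j => (tau k f j : ℕ) ≠ 0)
      = (Finset.univ.filter fun j => (f j : ℕ) ≠ 0) := by
  ext j
  simp [tau_ne hq2 k f j]

private lemma tau_tau {q m : ℕ} (hq2 : 2 ≤ q) (k k' : ℕ) (f : Fin m → Fin q) :
    tau k' (tau k f) = tau (k + k') f := by
  by_cases h : (Finset.univ.filter fun j => (f j : ℕ) ≠ 0).Nonempty
  · have hsupp := tau_supp hq2 k f
    have h2 : (Finset.univ.filter fun j => (tau k f j : ℕ) ≠ 0).Nonempty := by
      rw [hsupp]; exact h
    set j0 := (Finset.univ.filter fun j => (f j : ℕ) ≠ 0).min' h with hj0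
    have hj0' : (Finset.univ.filter fun j => (tau k f j : ℕ) ≠ 0).min' h2 = j0 := by
      congr 1
    funext j
    apply Fin.ext
    rw [tau_val hq2 k' (tau k f) h2 j, tau_val hq2 (k + k') f h j, hj0']
    by_cases hj : j = j0
    · rw [if_pos hj, if_pos hj]
      rw [tau_val hq2 k f h j0, if_pos rfl]
      have hc1 : 1 ≤ (f j0 : ℕ) := min'_pos f h
      rw [Nat.add_sub_cancel]
      rw [Nat.mod_add_mod, Nat.add_assoc]
    · rw [if_neg hj, if_neg hj, tau_val hq2 k f h j, if_neg hj]
  · have hf : tau k f = f := by unfold tau; rw [dif_neg h]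
    have hf' : tau (k + k') f = f := by unfold tau; rw [dif_neg h]
    have hf'' : tau k' f = f := by unfold tau; rw [dif_neg h]
    rw [hf, hf'', hf']

private lemma tau_id {q m : ℕ} (hq2 : 2 ≤ q) (k : ℕ) (hk : (q - 1) ∣ k) (f : Fin m → Fin q) :
    tau k f = f := by
  by_cases h : (Finset.univ.filter fun j => (f j : ℕ) ≠ 0).Nonempty
  · funext j
    apply Fin.ext
    rw [tau_val hq2 k f h j]
    by_cases hj : j = (Finset.univ.filter fun j => (f j : ℕ) ≠ 0).min' h
    · subst hj
      rw [if_pos rfl]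
      have hc1 := min'_pos f h
      have hc2 := (f ((Finset.univ.filter fun j => (f j : ℕ) ≠ 0).min' h)).isLt
      obtain ⟨t, ht⟩ := hk
      rw [ht, Nat.add_mul_mod_self_left, Nat.mod_eq_of_lt (by omega)]
      omega
    · rw [if_neg hj]
  · unfold tau; rw [dif_neg h]

private lemma tau_sum {q m r : ℕ} (hq2 : 2 ≤ q) (hrq : r ∣ q - 1) (k : ℕ) (f : Fin m → Fin q)
    (h : (Finset.univ.filter fun j => (f j : ℕ) ≠ 0).Nonempty) :
    (∑ j, (tau k f j : ℕ)) % r = ((∑ j, (f j : ℕ)) + k) % r := by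
  set j0 := (Finset.univ.filter fun j => (f j : ℕ) ≠ 0).min' h with hj0
  have hc1 : 1 ≤ (f j0 : ℕ) := min'_pos f h
  have hsum : ∀ g : Fin m → ℕ, ∑ j, g j = g j0 + ∑ j ∈ Finset.univ.erase j0, g j := by
    intro g
    rw [← Finset.add_sum_erase _ g (Finset.mem_univ j0)]
  have hoff : ∀ j ∈ Finset.univ.erase j0, (tau k f j : ℕ) = (f j : ℕ) := by
    intro j hj
    rw [Finset.mem_erase] at hj
    rw [tau_val hq2 k f h j, if_neg hj.1]
  rw [hsum (fun j => (tau k f j : ℕ)), hsum (fun j => (f j : ℕ))]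
  rw [Finset.sum_congr rfl hoff]
  rw [tau_val hq2 k f h j0, if_pos rfl]
  have hmod : ((f j0 : ℕ) - 1 + k) % (q - 1) ≡ (f j0 : ℕ) - 1 + k [MOD r] :=
    (Nat.mod_modEq _ _).of_dvd hrq
  have key : ((f j0 : ℕ) - 1 + k) % (q - 1) + 1 + ∑ j ∈ Finset.univ.erase j0, (f j : ℕ)
      ≡ ((f j0 : ℕ) - 1 + k) + 1 + ∑ j ∈ Finset.univ.erase j0, (f j : ℕ) [MOD r] :=
    (hmod.add_right 1).add_right _
  rw [show (f j0 : ℕ) - 1 + k + 1 = (f j0 : ℕ) + k by omega] at key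
  calc (((f j0 : ℕ) - 1 + k) % (q - 1) + 1 + ∑ j ∈ Finset.univ.erase j0, (f j : ℕ)) % r
      = ((f j0 : ℕ) + k + ∑ j ∈ Finset.univ.erase j0, (f j : ℕ)) % r := key
    _ = ((f j0 : ℕ) + ∑ j ∈ Finset.univ.erase j0, (f j : ℕ) + k) % r := by ring_nf

private lemma g_const {q m r ℓ : ℕ} (hq2 : 2 ≤ q) (hr1 : 1 < r) (hrq : r ∣ q - 1)
    {a b : ℕ} (ha : a < r) (hb : b < r) :
    (Finset.univ.filter fun f : Fin m → Fin q =>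
        (1 ≤ (Finset.univ.filter fun j => (f j : ℕ) ≠ 0).card
          ∧ (Finset.univ.filter fun j => (f j : ℕ) ≠ 0).card ≤ ℓ)
        ∧ (∑ j, (f j : ℕ)) % r = a).card
      = (Finset.univ.filter fun f : Fin m → Fin q =>
        (1 ≤ (Finset.univ.filter fun j => (f j : ℕ) ≠ 0).card
          ∧ (Finset.univ.filter fun j => (f j : ℕ) ≠ 0).card ≤ ℓ)
        ∧ (∑ j, (f j : ℕ)) % r = b).card := by
  set k := b + r - a with hk
  set k' := k * (q - 2) with hk'
  have hkk' : k + k' = k * (q - 1) := by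
    rw [hk']
    have : q - 1 = (q - 2) + 1 := by omega
    rw [this]
    ring
  have hdvd : (q - 1) ∣ (k + k') := by rw [hkk']; exact Dvd.intro_left k rfl
  have hrkk' : r ∣ (k + k') := dvd_trans hrq hdvd
  apply Finset.card_bij' (fun f _ => tau k f) (fun f _ => tau k' f)
  · -- maps to
    intro f hf
    rw [Finset.mem_filter] at hf ⊢
    obtain ⟨-, ⟨hw1, hw2⟩, hs⟩ := hf
    have hne : (Finset.univ.filter fun j => (f j : ℕ) ≠ 0).Nonempty :=
      Finset.card_pos.mp (by omega)
    refine ⟨Finset.mem_univ _, ?_, ?_⟩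
    · rw [tau_supp hq2]
      exact ⟨hw1, hw2⟩
    · rw [tau_sum hq2 hrq k f hne, ← Nat.mod_add_mod, hs]
      have : a + k = b + r := by omega
      rw [this, Nat.add_mod_right, Nat.mod_eq_of_lt hb]
  · -- inverse maps to
    intro f hf
    rw [Finset.mem_filter] at hf ⊢
    obtain ⟨-, ⟨hw1, hw2⟩, hs⟩ := hf
    have hne : (Finset.univ.filter fun j => (f j : ℕ) ≠ 0).Nonempty :=
      Finset.card_pos.mp (by omega)
    refine ⟨Finset.mem_univ _, ?_, ?_⟩
    · rw [tau_supp hq2]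
      exact ⟨hw1, hw2⟩
    · rw [tau_sum hq2 hrq k' f hne, ← Nat.mod_add_mod, hs]
      -- (b + k') % r = a
      obtain ⟨u, hu⟩ := hrkk'
      calc (b + k') % r = (b + k') % r := rfl
        _ = a := by
          have h1 : (a + (k + k')) % r = a := by
            rw [hu, Nat.add_mul_mod_self_left, Nat.mod_eq_of_lt ha]
          have h2 : a + (k + k') = (a + k) + k' := by omega
          have h3 : (a + k) % r = b := by
            have : a + k = b + r := by omega
            rw [this, Nat.add_mod_right, Nat.mod_eq_of_lt hb]
          rw [h2, ← Nat.mod_add_mod, h3] at h1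
          exact h1
  · intro f _
    rw [tau_tau hq2, tau_id hq2 _ hdvd]
  · intro f _
    rw [tau_tau hq2, (show k' + k = k + k' by omega), tau_id hq2 _ hdvd]

private lemma card_supp_eq {q m : ℕ} (hq2 : 2 ≤ q) (s : Finset (Fin m)) :
    (Finset.univ.filter fun f : Fin m → Fin q =>
        (Finset.univ.filter fun j => (f j : ℕ) ≠ 0) = s).card = (q - 1) ^ s.card := by
  have h0 : 0 < q := by omega
  have hset : (Finset.univ.filter fun f : Fin m → Fin q =>
        (Finset.univ.filter fun j => (f j : ℕ) ≠ 0) = s)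
      = Fintype.piFinset (fun j => if j ∈ s then Finset.univ.filter (fun c : Fin q => (c : ℕ) ≠ 0)
          else Finset.univ.filter (fun c : Fin q => (c : ℕ) = 0)) := by
    ext f
    simp only [Fintype.mem_piFinset, Finset.mem_filter, Finset.mem_univ, true_and]
    constructor
    · intro hf j
      by_cases hj : j ∈ s
      · rw [if_pos hj]
        simp only [Finset.mem_filter, Finset.mem_univ, true_and]
        have : j ∈ (Finset.univ.filter fun j => (f j : ℕ) ≠ 0) := hf ▸ hj
        exact (Finset.mem_filter.mp this).2
      · rw [if_neg hj]
        simp only [Finset.mem_filter, Finset.mem_univ, true_and]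
        have : j ∉ (Finset.univ.filter fun j => (f j : ℕ) ≠ 0) := hf ▸ hj
        simp only [Finset.mem_filter, Finset.mem_univ, true_and] at this
        omega
    · intro hf
      ext j
      simp only [Finset.mem_filter, Finset.mem_univ, true_and]
      have := hf j
      by_cases hj : j ∈ s
      · rw [if_pos hj] at this
        simp only [Finset.mem_filter, Finset.mem_univ, true_and] at this
        constructor <;> intro _ <;> [exact hj; exact this]
      · rw [if_neg hj] at this
        simp only [Finset.mem_filter, Finset.mem_univ, true_and] at this
        constructor <;> intro h1
        · exact absurd this h1
        · exact absurd h1 hj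
  rw [hset, Fintype.card_piFinset]
  have cardA : (Finset.univ.filter fun c : Fin q => (c : ℕ) ≠ 0).card = q - 1 := by
    have : (Finset.univ.filter fun c : Fin q => (c : ℕ) ≠ 0)
        = Finset.univ.erase ⟨0, h0⟩ := by
      ext c
      simp [Fin.ext_iff]
    rw [this, Finset.card_erase_of_mem (Finset.mem_univ _), Finset.card_univ, Fintype.card_fin]
  have cardB : (Finset.univ.filter fun c : Fin q => (c : ℕ) = 0).card = 1 := by
    have : (Finset.univ.filter fun c : Fin q => (c : ℕ) = 0) = {(⟨0, h0⟩ : Fin q)} := by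
      ext c
      simp [Fin.ext_iff]
    rw [this, Finset.card_singleton]
  calc ∏ j, (if j ∈ s then Finset.univ.filter (fun c : Fin q => (c : ℕ) ≠ 0)
          else Finset.univ.filter (fun c : Fin q => (c : ℕ) = 0)).card
      = ∏ j, (if j ∈ s then q - 1 else 1) := by
        apply Finset.prod_congr rfl
        intro j _
        by_cases hj : j ∈ s <;> simp [hj, cardA, cardB]
    _ = ∏ j ∈ Finset.univ ∩ s, (q - 1) := Finset.prod_ite_mem _ _ _
    _ = (q - 1) ^ s.card := by rw [Finset.univ_inter, Finset.prod_const]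

private lemma count_T {q m ℓ : ℕ} (hq2 : 2 ≤ q) :
    (Finset.univ.filter fun f : Fin m → Fin q =>
        1 ≤ (Finset.univ.filter fun j => (f j : ℕ) ≠ 0).card
          ∧ (Finset.univ.filter fun j => (f j : ℕ) ≠ 0).card ≤ ℓ).card
      = ∑ t ∈ Finset.Icc 1 ℓ, m.choose t * (q - 1) ^ t := by
  set T := Finset.univ.filter fun f : Fin m → Fin q =>
      1 ≤ (Finset.univ.filter fun j => (f j : ℕ) ≠ 0).card
        ∧ (Finset.univ.filter fun j => (f j : ℕ) ≠ 0).card ≤ ℓ with hT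
  set tgt := (Finset.univ : Finset (Finset (Fin m))).filter fun s => 1 ≤ s.card ∧ s.card ≤ ℓ
    with htgt
  have step1 : T.card = ∑ s ∈ tgt, (T.filter fun f =>
      (Finset.univ.filter fun j => (f j : ℕ) ≠ 0) = s).card := by
    apply Finset.card_eq_sum_card_fiberwise
    intro f hf
    rw [hT, Finset.mem_coe, Finset.mem_filter] at hf
    rw [htgt, Finset.mem_coe, Finset.mem_filter]
    exact ⟨Finset.mem_univ _, hf.2⟩
  have step2 : ∀ s ∈ tgt, (T.filter fun f =>
      (Finset.univ.filter fun j => (f j : ℕ) ≠ 0) = s).card = (q - 1) ^ s.card := by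
    intro s hs
    rw [htgt, Finset.mem_filter] at hs
    rw [← card_supp_eq hq2 s]
    congr 1
    rw [hT, Finset.filter_filter]
    apply Finset.filter_congr
    intro f _
    constructor
    · intro h1; exact h1.2
    · intro h1; exact ⟨h1 ▸ hs.2, h1⟩
  rw [step1, Finset.sum_congr rfl step2]
  have step3 : ∑ s ∈ tgt, (q - 1) ^ s.card
      = ∑ t ∈ Finset.Icc 1 ℓ, ∑ s ∈ tgt.filter (fun s => s.card = t), (q - 1) ^ s.card := by
    symm
    apply Finset.sum_fiberwise_of_maps_to
    intro s hs
    rw [htgt, Finset.mem_filter] at hs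
    rw [Finset.mem_Icc]
    exact hs.2
  rw [step3]
  apply Finset.sum_congr rfl
  intro t ht
  rw [Finset.mem_Icc] at ht
  have hfib : tgt.filter (fun s => s.card = t) = Finset.powersetCard t Finset.univ := by
    ext s
    rw [htgt, Finset.filter_filter, Finset.mem_filter, Finset.mem_powersetCard_univ]
    constructor
    · intro h1; exact h1.2.2
    · intro h1; exact ⟨Finset.mem_univ _, ⟨h1 ▸ ht.1, h1 ▸ ht.2⟩, h1⟩
  rw [hfib]
  calc ∑ s ∈ Finset.powersetCard t (Finset.univ : Finset (Fin m)), (q - 1) ^ s.card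
      = ∑ _s ∈ Finset.powersetCard t (Finset.univ : Finset (Fin m)), (q - 1) ^ t := by
        apply Finset.sum_congr rfl
        intro s hs
        rw [Finset.mem_powersetCard_univ] at hs
        rw [hs]
    _ = m.choose t * (q - 1) ^ t := by
        rw [Finset.sum_const, Finset.card_powersetCard, Finset.card_univ, Fintype.card_fin,
          smul_eq_mul]

theorem stmt_9 (q m r ℓ : ℕ) (hq : IsPrimePow q) (hm : 2 ≤ m) (hr : 1 < r)
    (hrq : r ∣ q - 1) (hℓ1 : 1 ≤ ℓ) (hℓ2 : ℓ ≤ m - 1) :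
    ((Finset.Icc 1 (q ^ m - 1 - 1)).filter
        (fun i => ((Nat.digits q i).filter (· ≠ 0)).length ≤ ℓ ∧ i % r = 1)).card
      = (∑ t ∈ Finset.Icc 1 ℓ, m.choose t * (q - 1) ^ t) / r := by
  have hq2 : 2 ≤ q := hq.two_le
  have hq1 : q % r = 1 := by
    obtain ⟨c, hc⟩ := hrq
    rw [show q = r * c + 1 by omega, Nat.mul_add_mod]
    exact Nat.mod_eq_of_lt hr
  have h4 : 4 ≤ q ^ m := by
    calc (4 : ℕ) = 2 ^ 2 := rfl
      _ ≤ q ^ 2 := Nat.pow_le_pow_left hq2 2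
      _ ≤ q ^ m := Nat.pow_le_pow_right (by omega) hm
  -- Step A : extend the range
  have hA : (Finset.Icc 1 (q ^ m - 1 - 1)).filter
        (fun i => ((Nat.digits q i).filter (· ≠ 0)).length ≤ ℓ ∧ i % r = 1)
      = (Finset.range (q ^ m)).filter
        (fun i => ((Nat.digits q i).filter (· ≠ 0)).length ≤ ℓ ∧ i % r = 1) := by
    ext i
    simp only [Finset.mem_filter, Finset.mem_Icc, Finset.mem_range]
    constructor
    · rintro ⟨⟨h1, h2⟩, hp⟩
      exact ⟨by omega, hp⟩
    · rintro ⟨h1, hwt, hmod⟩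
      refine ⟨⟨?_, ?_⟩, hwt, hmod⟩
      · rcases Nat.eq_zero_or_pos i with h0 | h0
        · rw [h0, Nat.zero_mod] at hmod; omega
        · omega
      · by_contra hcon
        have hieq : i = q ^ m - 1 := by omega
        rw [hieq, rep_aux hq2 m] at hwt
        have hfil : (List.replicate m (q - 1)).filter (· ≠ 0) = List.replicate m (q - 1) := by
          apply List.filter_eq_self.mpr
          intro a ha
          rw [List.eq_of_mem_replicate ha]
          simpa using (by omega : q - 1 ≠ 0)
        rw [hfil, List.length_replicate] at hwt
        omega
  rw [hA]
  -- Step B : transport to functions Fin m → Fin q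
  have hB : ((Finset.range (q ^ m)).filter
        (fun i => ((Nat.digits q i).filter (· ≠ 0)).length ≤ ℓ ∧ i % r = 1)).card
      = (Finset.univ.filter fun f : Fin m → Fin q =>
          (Finset.univ.filter fun j => (f j : ℕ) ≠ 0).card ≤ ℓ
            ∧ (∑ j, (f j : ℕ)) % r = 1).card := by
    rw [Finset.card_filter, Finset.card_filter,
      ← Fin.sum_univ_eq_sum_range
        (fun i => if ((Nat.digits q i).filter (· ≠ 0)).length ≤ ℓ ∧ i % r = 1 then 1 else 0)
        (q ^ m),
      ← Equiv.sum_comp finFunctionFinEquiv]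
    apply Finset.sum_congr rfl
    intro f _
    have hd : ∀ j : Fin m, (finFunctionFinEquiv f : ℕ) / q ^ (j : ℕ) % q = (f j : ℕ) := by
      intro j
      have h1 : finFunctionFinEquiv.symm (finFunctionFinEquiv f) = f :=
        Equiv.symm_apply_apply _ _
      have h2 := congrFun h1 j
      have h3 : (finFunctionFinEquiv.symm (finFunctionFinEquiv f) j : ℕ)
          = (finFunctionFinEquiv f : ℕ) / q ^ (j : ℕ) % q := rfl
      rw [← h3, h2]
    have hwt : ((Nat.digits q (finFunctionFinEquiv f : ℕ)).filter (· ≠ 0)).length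
        = (Finset.univ.filter fun j => (f j : ℕ) ≠ 0).card := by
      rw [wt_aux hq2 m _ (finFunctionFinEquiv f).isLt, Finset.card_filter, Finset.card_filter,
        ← Fin.sum_univ_eq_sum_range
          (fun j => if (finFunctionFinEquiv f : ℕ) / q ^ j % q ≠ 0 then 1 else 0) m]
      apply Finset.sum_congr rfl
      intro j _
      rw [hd j]
    have hmd : (finFunctionFinEquiv f : ℕ) % r = (∑ j, (f j : ℕ)) % r := by
      rw [mod_aux hq2 hq1 m _ (finFunctionFinEquiv f).isLt,
        ← Fin.sum_univ_eq_sum_range (fun j => (finFunctionFinEquiv f : ℕ) / q ^ j % q) m]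
      congr 1
      exact Finset.sum_congr rfl (fun j _ => hd j)
    simp only [hwt, hmd]
  rw [hB]
  -- Step C : add the condition 1 ≤ weight
  have hC : (Finset.univ.filter fun f : Fin m → Fin q =>
          (Finset.univ.filter fun j => (f j : ℕ) ≠ 0).card ≤ ℓ
            ∧ (∑ j, (f j : ℕ)) % r = 1)
      = (Finset.univ.filter fun f : Fin m → Fin q =>
          (1 ≤ (Finset.univ.filter fun j => (f j : ℕ) ≠ 0).card
            ∧ (Finset.univ.filter fun j => (f j : ℕ) ≠ 0).card ≤ ℓ)
            ∧ (∑ j, (f j : ℕ)) % r = 1) := by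
    apply Finset.filter_congr
    intro f _
    constructor
    · rintro ⟨h1, h2⟩
      refine ⟨⟨?_, h1⟩, h2⟩
      by_contra hcon
      have hemp : (Finset.univ.filter fun j => (f j : ℕ) ≠ 0) = ∅ :=
        Finset.card_eq_zero.mp (Nat.eq_zero_of_not_pos hcon)
      have hzero : (∑ j, (f j : ℕ)) = 0 := by
        apply Finset.sum_eq_zero
        intro j _
        by_contra hne
        have : j ∈ (Finset.univ.filter fun j => (f j : ℕ) ≠ 0) :=
          Finset.mem_filter.mpr ⟨Finset.mem_univ _, hne⟩
        rw [hemp] at this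
        exact absurd this (Finset.notMem_empty j)
      rw [hzero, Nat.zero_mod] at h2
      exact absurd h2.symm one_ne_zero
    · rintro ⟨⟨_, h1⟩, h2⟩
      exact ⟨h1, h2⟩
  rw [hC]
  -- Step D : equidistribution over residues
  have hfib : (Finset.univ.filter fun f : Fin m → Fin q =>
          1 ≤ (Finset.univ.filter fun j => (f j : ℕ) ≠ 0).card
            ∧ (Finset.univ.filter fun j => (f j : ℕ) ≠ 0).card ≤ ℓ).card
      = ∑ a ∈ Finset.range r,
          ((Finset.univ.filter fun f : Fin m → Fin q =>
            1 ≤ (Finset.univ.filter fun j => (f j : ℕ) ≠ 0).card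
              ∧ (Finset.univ.filter fun j => (f j : ℕ) ≠ 0).card ≤ ℓ).filter
            (fun f => (∑ j, (f j : ℕ)) % r = a)).card := by
    apply Finset.card_eq_sum_card_fiberwise
    intro f _
    exact Finset.mem_range.mpr (Nat.mod_lt _ (Nat.zero_lt_one.trans hr))
  have hconst : ∀ a ∈ Finset.range r,
      ((Finset.univ.filter fun f : Fin m → Fin q =>
            1 ≤ (Finset.univ.filter fun j => (f j : ℕ) ≠ 0).card
              ∧ (Finset.univ.filter fun j => (f j : ℕ) ≠ 0).card ≤ ℓ).filter
            (fun f => (∑ j, (f j : ℕ)) % r = a)).card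
      = (Finset.univ.filter fun f : Fin m → Fin q =>
          (1 ≤ (Finset.univ.filter fun j => (f j : ℕ) ≠ 0).card
            ∧ (Finset.univ.filter fun j => (f j : ℕ) ≠ 0).card ≤ ℓ)
            ∧ (∑ j, (f j : ℕ)) % r = 1).card := by
    intro a ha0
    rw [Finset.filter_filter]
    exact g_const hq2 hr hrq (Finset.mem_range.mp ha0) hr
  have hTcard : (Finset.univ.filter fun f : Fin m → Fin q =>
          1 ≤ (Finset.univ.filter fun j => (f j : ℕ) ≠ 0).card
            ∧ (Finset.univ.filter fun j => (f j : ℕ) ≠ 0).card ≤ ℓ).card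
      = r * (Finset.univ.filter fun f : Fin m → Fin q =>
          (1 ≤ (Finset.univ.filter fun j => (f j : ℕ) ≠ 0).card
            ∧ (Finset.univ.filter fun j => (f j : ℕ) ≠ 0).card ≤ ℓ)
            ∧ (∑ j, (f j : ℕ)) % r = 1).card := by
    rw [hfib, Finset.sum_congr rfl hconst, Finset.sum_const, Finset.card_range, smul_eq_mul]
  rw [← count_T hq2 (m := m) (ℓ := ℓ), hTcard, Nat.mul_div_cancel_left _ (Nat.zero_lt_one.trans hr)]
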